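/- arXiv:2509.14774 — 2 statements merged into one kernel-verified Lean document; each statement's English description precedes it below -/
import Mathlib

section
/- The right derived functors of the inverse-limit functor on ℕ-indexed inverse systems of abelian groups vanish in all degrees i ≥ 2: for every inverse system (Aₙ) of abelian groups indexed by ℕ, Rⁱ lim (Aₙ) = 0 for i ≥ 2. -/
open CategoryTheory CategoryTheory.Limits

instance : (lim : (ℕᵒᵖ ⥤ AddCommGrpCat.{0}) ⥤ AddCommGrpCat.{0}).Additive where
  map_add {F G f g} := by
    apply limit.hom_ext
    intro j
    simp [Preadditive.add_comp, Preadditive.comp_add]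

open Opposite

namespace RlimVanish

/-- The "coinduced" diagram `m ↦ ∏_{k ≤ m} J(k)`. -/
noncomputable def coP (J : ℕᵒᵖ ⥤ AddCommGrpCat.{0}) : ℕᵒᵖ ⥤ AddCommGrpCat.{0} where
  obj m := AddCommGrpCat.of (∀ k : {k : ℕ // k ≤ m.unop}, J.obj (op k.1))
  map {m m'} f := AddCommGrpCat.ofHom
    { toFun := fun x k => x ⟨k.1, k.2.trans (leOfHom f.unop)⟩
      map_zero' := rfl
      map_add' := fun _ _ => rfl }
  map_id _ := rfl
  map_comp _ _ := rfl

/-- The canonical mono `J ⟶ coP J`. -/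
noncomputable def coι (J : ℕᵒᵖ ⥤ AddCommGrpCat.{0}) : J ⟶ coP J where
  app m := AddCommGrpCat.ofHom
    { toFun := fun x k => J.map (homOfLE k.2).op x
      map_zero' := by funext k; exact map_zero _
      map_add' := fun a b => by funext k; exact map_add _ a b }
  naturality m m' f := by
    ext x
    funext k
    show J.map _ (J.map f x) = J.map _ x
    rw [← comp_apply, ← J.map_comp]
    congr 1

lemma coι_app_self (J : ℕᵒᵖ ⥤ AddCommGrpCat.{0}) (m : ℕᵒᵖ) (a : J.obj m) :
    ((coι J).app m a) ⟨m.unop, le_rfl⟩ = a := by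
  show J.map (homOfLE le_rfl).op a = a
  rw [show (homOfLE (le_refl m.unop)).op = 𝟙 m from Subsingleton.elim _ _, J.map_id]
  rfl

instance coι_mono (J : ℕᵒᵖ ⥤ AddCommGrpCat.{0}) : Mono (coι J) := by
  have : ∀ m : ℕᵒᵖ, Mono ((coι J).app m) := by
    intro m
    rw [AddCommGrpCat.mono_iff_injective]
    intro a b h
    rw [← coι_app_self J m a, ← coι_app_self J m b, h]
  exact NatTrans.mono_of_mono_app _

lemma coP_map_surjective (J : ℕᵒᵖ ⥤ AddCommGrpCat.{0}) {m m' : ℕᵒᵖ} (f : m ⟶ m') :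
    Function.Surjective ((coP J).map f) := by
  classical
  intro y
  refine ⟨fun k => if h : k.1 ≤ m'.unop then y ⟨k.1, h⟩ else 0, ?_⟩
  funext k
  show dite _ _ _ = _
  rw [dif_pos k.2]

/-- The transition maps of an injective object of `ℕᵒᵖ ⥤ AddCommGrpCat` are surjective. -/
lemma injective_map_surjective (J : ℕᵒᵖ ⥤ AddCommGrpCat.{0}) [Injective J]
    {m m' : ℕᵒᵖ} (f : m ⟶ m') : Function.Surjective (J.map f) := by
  set r : coP J ⟶ J := Injective.factorThru (𝟙 J) (coι J) with hr
  have hcomp : coι J ≫ r = 𝟙 J := Injective.comp_factorThru _ _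
  intro z
  obtain ⟨w, hw⟩ := coP_map_surjective J f ((coι J).app m' z)
  refine ⟨r.app m w, ?_⟩
  have h1 : J.map f (r.app m w) = r.app m' ((coP J).map f w) := by
    have := ConcreteCategory.congr_hom (r.naturality f) w
    simp only [comp_apply] at this
    exact this.symm
  rw [h1, hw]
  have := ConcreteCategory.congr_hom (congrArg (fun (g : J ⟶ J) => g.app m') hcomp) z
  simpa using this

/-- The Mittag-Leffler style argument: given a complex `W ⟶ A ⟶ B ⟶ D` of inverse
systems which is pointwise exact at `A` and `B`, such that `W` has surjective
transition maps, the induced complex of limits is exact at `lim A → lim B`. -/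
lemma lim_exact (W A B D : ℕᵒᵖ ⥤ AddCommGrpCat.{0})
    (e : W ⟶ A) (f : A ⟶ B) (g : B ⟶ D)
    (hWsurj : ∀ n : ℕ, Function.Surjective (W.map (homOfLE (Nat.le_succ n)).op))
    (hexA : ∀ (n : ℕᵒᵖ) (a : A.obj n), f.app n a = 0 → ∃ w, e.app n w = a)
    (hexB : ∀ (n : ℕᵒᵖ) (b : B.obj n), g.app n b = 0 → ∃ a, f.app n a = b)
    (hef : ∀ (n : ℕᵒᵖ) (w : W.obj n), f.app n (e.app n w) = 0)
    (x : (limit B : AddCommGrpCat.{0})) (hx : limMap g x = 0) :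
    ∃ y : (limit A : AddCommGrpCat.{0}), limMap f y = x := by
  classical
  set xx : ∀ n : ℕ, B.obj (op n) := fun n => limit.π B (op n) x with hxxdef
  have hxx : ∀ n : ℕ, g.app (op n) (xx n) = 0 := by
    intro n
    have h : limit.π D (op n) (limMap g x) = g.app (op n) (limit.π B (op n) x) :=
      ConcreteCategory.congr_hom (limMap_π g (op n)) x
    rw [hx, map_zero] at h
    exact h.symm
  have hcompat : ∀ n : ℕ, B.map (homOfLE (Nat.le_succ n)).op (xx (n+1)) = xx n :=
    fun n => ConcreteCategory.congr_hom (limit.w B (homOfLE (Nat.le_succ n)).op) x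
  have step : ∀ (n : ℕ) (a : A.obj (op n)), f.app (op n) a = xx n →
      ∃ a' : A.obj (op (n+1)), f.app (op (n+1)) a' = xx (n+1) ∧
        A.map (homOfLE (Nat.le_succ n)).op a' = a := by
    intro n a ha
    obtain ⟨b, hb⟩ := hexB (op (n+1)) (xx (n+1)) (hxx (n+1))
    set t := (homOfLE (Nat.le_succ n)).op with htdef
    have hnatf : f.app (op n) (A.map t b) = B.map t (f.app (op (n+1)) b) :=
      ConcreteCategory.congr_hom (f.naturality t) b
    have hδ : f.app (op n) (A.map t b - a) = 0 := by
      rw [map_sub, ha, hnatf, hb, hcompat n, sub_self]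
    obtain ⟨w, hwv⟩ := hexA _ _ hδ
    obtain ⟨w', hw'⟩ := hWsurj n w
    refine ⟨b - e.app _ w', ?_, ?_⟩
    · rw [map_sub, hb, hef, sub_zero]
    · have hnate : e.app (op n) (W.map t w') = A.map t (e.app (op (n+1)) w') :=
        ConcreteCategory.congr_hom (e.naturality t) w'
      rw [map_sub, ← hnate, hw', hwv]
      abel
  obtain ⟨a0, ha0⟩ := hexB (op 0) (xx 0) (hxx 0)
  let Y : ∀ n : ℕ, {a : A.obj (op n) // f.app (op n) a = xx n} := fun n =>
    Nat.rec ⟨a0, ha0⟩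
      (fun n p => ⟨(step n p.1 p.2).choose, (step n p.1 p.2).choose_spec.1⟩) n
  have hYsucc : ∀ n : ℕ, A.map (homOfLE (Nat.le_succ n)).op (Y (n+1)).1 = (Y n).1 :=
    fun n => (step n (Y n).1 (Y n).2).choose_spec.2
  have hYle : ∀ (m n : ℕ) (h : m ≤ n), A.map (homOfLE h).op (Y n).1 = (Y m).1 := by
    intro m n h
    induction n, h using Nat.le_induction with
    | base =>
      rw [show (homOfLE (le_refl m)).op = 𝟙 (op m) from Subsingleton.elim _ _, A.map_id]
      rfl
    | succ n hn ih =>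
      rw [show (homOfLE (Nat.le_succ_of_le hn)).op
            = (homOfLE (Nat.le_succ n)).op ≫ (homOfLE hn).op from Subsingleton.elim _ _,
        A.map_comp]
      show A.map _ (A.map _ _) = _
      rw [hYsucc n, ih]
  let ycone : Cone A :=
    { pt := AddCommGrpCat.of ℤ
      π :=
        { app := fun n => AddCommGrpCat.ofHom ((zmultiplesHom _) (Y n.unop).1)
          naturality := fun n n' u => by
            apply AddCommGrpCat.int_hom_ext
            show (1 : ℤ) • (Y n'.unop).1 = A.map u ((1 : ℤ) • (Y n.unop).1)
            rw [one_zsmul, one_zsmul,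
              show u = (homOfLE (leOfHom u.unop)).op from Subsingleton.elim _ _]
            exact (hYle _ _ _).symm } }
  refine ⟨(limit.lift A ycone) (1 : ℤ), ?_⟩
  have hy : ∀ n : ℕᵒᵖ, limit.π A n ((limit.lift A ycone) (1 : ℤ)) = (Y n.unop).1 := by
    intro n
    have h : limit.π A n ((limit.lift A ycone) (1 : ℤ))
        = (AddCommGrpCat.ofHom ((zmultiplesHom _) (Y n.unop).1)) (1 : ℤ) :=
      ConcreteCategory.congr_hom (limit.lift_π ycone n) (1 : ℤ)
    rw [h]
    exact one_zsmul _
  apply Concrete.limit_ext (F := B)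
  intro n
  have h : limit.π B n (limMap f ((limit.lift A ycone) (1 : ℤ)))
      = f.app n (limit.π A n ((limit.lift A ycone) (1 : ℤ))) :=
    ConcreteCategory.congr_hom (limMap_π f n) _
  rw [h, hy n, (Y n.unop).2]

end RlimVanish

open RlimVanish

/-- The right derived functors of the inverse-limit functor on ℕ-indexed inverse
systems of abelian groups vanish in degrees `i ≥ 2`. -/
theorem rightDerived_lim_vanishes_of_ge_two
    [EnoughInjectives (ℕᵒᵖ ⥤ AddCommGrpCat.{0})]
    (F : ℕᵒᵖ ⥤ AddCommGrpCat.{0}) (i : ℕ) (hi : 2 ≤ i) :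
    IsZero
      (((lim : (ℕᵒᵖ ⥤ AddCommGrpCat.{0}) ⥤ AddCommGrpCat.{0}).rightDerived i).obj F) := by
  obtain ⟨j, rfl⟩ : ∃ j, i = j + 2 := ⟨i - 2, by omega⟩
  obtain ⟨I⟩ := HasInjectiveResolution.out (Z := F)
  refine IsZero.of_iso ?_ (I.isoRightDerivedObj lim (j+2))
  have hpt : ∀ (k : ℕ) (n : ℕᵒᵖ) (b : (I.cocomplex.X (k+1)).obj n),
      (I.cocomplex.d (k+1) (k+2)).app n b = 0 →
      ∃ a, (I.cocomplex.d k (k+1)).app n a = b := by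
    intro k n b hb
    have hex := (I.exact_succ k).map ((evaluation ℕᵒᵖ AddCommGrpCat.{0}).obj n)
    rw [ShortComplex.ab_exact_iff] at hex
    exact hex b hb
  set K := ((lim : (ℕᵒᵖ ⥤ AddCommGrpCat.{0}) ⥤ AddCommGrpCat.{0}).mapHomologicalComplex
    (ComplexShape.up ℕ)).obj I.cocomplex with hK
  show IsZero (K.homology (j+2))
  rw [← HomologicalComplex.exactAt_iff_isZero_homology]
  rw [HomologicalComplex.exactAt_iff' K (j+1) (j+2) (j+3) (by simp) (by simp)]
  rw [ShortComplex.ab_exact_iff]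
  intro x hx
  have hx' : limMap (I.cocomplex.d (j+2) (j+3)) x = 0 := by
    rw [← lim_map]; exact hx
  obtain ⟨y, hy⟩ := lim_exact (I.cocomplex.X j) (I.cocomplex.X (j+1))
    (I.cocomplex.X (j+2)) (I.cocomplex.X (j+3))
    (I.cocomplex.d j (j+1)) (I.cocomplex.d (j+1) (j+2)) (I.cocomplex.d (j+2) (j+3))
    (fun n => injective_map_surjective _ _)
    (fun n a ha => hpt j n a ha)
    (fun n b hb => hpt (j+1) n b hb)
    (fun n w => by
      have h := I.cocomplex.d_comp_d j (j+1) (j+2)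
      have h2 : (I.cocomplex.d (j+1) (j+2)).app n ((I.cocomplex.d j (j+1)).app n w)
          = ((I.cocomplex.d j (j+1)) ≫ (I.cocomplex.d (j+1) (j+2))).app n w := rfl
      rw [h2, h]
      rfl)
    x hx'
  refine ⟨y, ?_⟩
  show ((lim : (ℕᵒᵖ ⥤ AddCommGrpCat.{0}) ⥤ AddCommGrpCat.{0}).map
    (I.cocomplex.d (j+1) (j+2))) y = x
  rw [lim_map]
  exact hy
end

section
/- Let C be a triangulated category with a weight structure and let f : x → y be a morphism and k an integer. The following are equivalent: (1) f factors as x → x' → y with x' ∈ C_{w≥k+1}; (2) there exists a weight decomposition w_{≤k}x → x → w_{≥k+1}x (a distinguished triangle with w_{≤k}x ∈ C_{w≤k} and w_{≥k+1}x ∈ C_{w≥k+1}) such that the composite w_{≤k}x → x → y is zero; (3) for every t ∈ C_{w≤k} and every morphism t → x, the composite t → x → y is zero. -/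
open CategoryTheory CategoryTheory.Limits CategoryTheory.Pretriangulated

universe v u

/-- A weight structure on a pretriangulated category `C`. -/
structure WeightStructure (C : Type u) [Category.{v} C] [HasZeroObject C]
    [Preadditive C] [HasShift C ℤ] [∀ n : ℤ, (shiftFunctor C n).Additive]
    [Pretriangulated C] where
  le : Set C
  ge : Set C
  le_retract : ∀ ⦃x y : C⦄, y ∈ le →
    (∃ (i : x ⟶ y) (r : y ⟶ x), i ≫ r = 𝟙 x) → x ∈ le
  ge_retract : ∀ ⦃x y : C⦄, y ∈ ge →
    (∃ (i : x ⟶ y) (r : y ⟶ x), i ≫ r = 𝟙 x) → x ∈ ge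
  ge_shift : ∀ x ∈ ge, x⟦(1 : ℤ)⟧ ∈ ge
  le_shift : ∀ x ∈ le, x⟦(-1 : ℤ)⟧ ∈ le
  orth : ∀ x ∈ le, ∀ y ∈ ge, ∀ n : ℤ, 1 ≤ n → ∀ f : x ⟶ y⟦(-n : ℤ)⟧, f = 0
  decomp : ∀ x : C, ∃ (a b : C) (f : a ⟶ x) (g : x ⟶ b) (h : b ⟶ a⟦(1 : ℤ)⟧),
    a ∈ le ∧ b⟦(-1 : ℤ)⟧ ∈ ge ∧ Triangle.mk f g h ∈ distTriang C

variable {C : Type u} [Category.{v} C] [HasZeroObject C] [Preadditive C]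
  [HasShift C ℤ] [∀ n : ℤ, (shiftFunctor C n).Additive] [Pretriangulated C]

/-- `C_{w≤k} = Σᵏ C_{w≤0}`. -/
def WeightStructure.leN (W : WeightStructure C) (k : ℤ) : Set C :=
  {x : C | x⟦(-k : ℤ)⟧ ∈ W.le}

/-- `C_{w≥k} = Σᵏ C_{w≥0}`. -/
def WeightStructure.geN (W : WeightStructure C) (k : ℤ) : Set C :=
  {x : C | x⟦(-k : ℤ)⟧ ∈ W.ge}

/-- Orthogonality: any morphism from an object of `C_{w≤k}` to an object of
`C_{w≥k+1}` vanishes. -/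
lemma WeightStructure.orthN (W : WeightStructure C) (k : ℤ) {t x' : C}
    (ht : t ∈ W.leN k) (hx' : x' ∈ W.geN (k + 1)) (g : t ⟶ x') : g = 0 := by
  set y : C := (x'⟦(-(k + 1) : ℤ)⟧⟦(1 : ℤ)⟧)⟦(1 : ℤ)⟧ with hy
  have hyge : y ∈ W.ge := W.ge_shift _ (W.ge_shift _ hx')
  have e : x'⟦(-k : ℤ)⟧ ≅ y⟦(-(1 : ℤ))⟧ :=
    ((shiftFunctorAdd' C (-(k + 1)) 1 (-k) (by ring)).app x') ≪≫
      ((shiftFunctorCompIsoId C (1 : ℤ) (-(1 : ℤ)) (by ring)).app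
        (x'⟦(-(k + 1) : ℤ)⟧⟦(1 : ℤ)⟧)).symm
  have h0 : g⟦(-k : ℤ)⟧' ≫ e.hom = 0 :=
    W.orth _ ht y hyge 1 (by norm_num) _
  have h1 : g⟦(-k : ℤ)⟧' = 0 := by
    have := congrArg (fun u => u ≫ e.inv) h0
    simpa using this
  exact (shiftFunctor C (-k : ℤ)).map_injective (by simpa using h1)

/-- Characterizations of morphisms killing weights `≤ k`: (1) factoring through
an object of `C_{w≥k+1}`; (2) vanishing of the composite `w_{≤k}x → x → y` for
some weight decomposition of `x`; (3) vanishing of all composites `t → x → y`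
with `t ∈ C_{w≤k}`. -/
theorem kills_weights_le_iff (W : WeightStructure C) {x y : C} (f : x ⟶ y)
    (k : ℤ) :
    ((∃ (x' : C) (_ : x' ∈ W.geN (k + 1)) (g : x ⟶ x') (h : x' ⟶ y),
        g ≫ h = f) ↔
      (∃ (a b : C) (α : a ⟶ x) (β : x ⟶ b) (γ : b ⟶ a⟦(1 : ℤ)⟧),
        a ∈ W.leN k ∧ b ∈ W.geN (k + 1) ∧
          (Triangle.mk α β γ ∈ distTriang C) ∧ α ≫ f = 0)) ∧
    ((∃ (a b : C) (α : a ⟶ x) (β : x ⟶ b) (γ : b ⟶ a⟦(1 : ℤ)⟧),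
        a ∈ W.leN k ∧ b ∈ W.geN (k + 1) ∧
          (Triangle.mk α β γ ∈ distTriang C) ∧ α ≫ f = 0) ↔
      (∀ t ∈ W.leN k, ∀ g : t ⟶ x, g ≫ f = 0)) := by
  -- (1) → (3)
  have h13 : (∃ (x' : C) (_ : x' ∈ W.geN (k + 1)) (g : x ⟶ x') (h : x' ⟶ y),
      g ≫ h = f) → (∀ t ∈ W.leN k, ∀ g : t ⟶ x, g ≫ f = 0) := by
    rintro ⟨x', hx', g, h, rfl⟩ t ht u
    have : u ≫ g = 0 := W.orthN k ht hx' (u ≫ g)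
    rw [← Category.assoc, this, zero_comp]
  -- (2) → (1)
  have h21 : (∃ (a b : C) (α : a ⟶ x) (β : x ⟶ b) (γ : b ⟶ a⟦(1 : ℤ)⟧),
      a ∈ W.leN k ∧ b ∈ W.geN (k + 1) ∧
        (Triangle.mk α β γ ∈ distTriang C) ∧ α ≫ f = 0) →
      (∃ (x' : C) (_ : x' ∈ W.geN (k + 1)) (g : x ⟶ x') (h : x' ⟶ y),
        g ≫ h = f) := by
    rintro ⟨a, b, α, β, γ, ha, hb, hdist, hαf⟩
    obtain ⟨h, hh⟩ := Triangle.yoneda_exact₂ _ hdist f hαf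
    exact ⟨b, hb, β, h, hh.symm⟩
  -- (3) → (2)
  have h32 : (∀ t ∈ W.leN k, ∀ g : t ⟶ x, g ≫ f = 0) →
      (∃ (a b : C) (α : a ⟶ x) (β : x ⟶ b) (γ : b ⟶ a⟦(1 : ℤ)⟧),
        a ∈ W.leN k ∧ b ∈ W.geN (k + 1) ∧
          (Triangle.mk α β γ ∈ distTriang C) ∧ α ≫ f = 0) := by
    intro h3
    obtain ⟨a, b, φ, ψ, χ, ha, hb, hdist⟩ := W.decomp (x⟦(-k : ℤ)⟧)
    set T' := (Triangle.shiftFunctor C k).obj (Triangle.mk φ ψ χ) with hT'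
    have hT'dist : T' ∈ distTriang C :=
      Triangle.shift_distinguished _ hdist k
    set e : (x⟦(-k : ℤ)⟧)⟦(k : ℤ)⟧ ≅ x :=
      (shiftFunctorCompIsoId C (-k : ℤ) (k : ℤ) (by ring)).app x with he
    refine ⟨a⟦(k : ℤ)⟧, b⟦(k : ℤ)⟧, T'.mor₁ ≫ e.hom, e.inv ≫ T'.mor₂, T'.mor₃,
      ?_, ?_, ?_, ?_⟩
    · -- a⟦k⟧ ∈ leN k
      have i := (shiftFunctorCompIsoId C (k : ℤ) (-k : ℤ) (by ring)).app a
      exact W.le_retract ha ⟨i.hom, i.inv, i.hom_inv_id⟩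
    · -- b⟦k⟧ ∈ geN (k+1)
      have i := (shiftFunctorAdd' C (k : ℤ) (-(k + 1) : ℤ) (-1 : ℤ)
        (by ring)).app b
      exact W.ge_retract hb ⟨i.inv, i.hom, i.inv_hom_id⟩
    · -- distinguished
      refine isomorphic_distinguished _ hT'dist _ ?_
      refine Triangle.isoMk _ _ (Iso.refl _) e.symm (Iso.refl _) ?_ ?_ ?_
      · exact (Category.assoc _ _ _).trans ((congrArg (T'.mor₁ ≫ ·) e.hom_inv_id).trans
          ((Category.comp_id _).trans (Category.id_comp _).symm))
      · exact Category.comp_id _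
      · exact ((congrArg (T'.mor₃ ≫ ·) (CategoryTheory.Functor.map_id _ _)).trans (Category.comp_id _)).trans
          (Category.id_comp _).symm
    · -- α ≫ f = 0
      have : (a⟦(k : ℤ)⟧) ∈ W.leN k := by
        have i := (shiftFunctorCompIsoId C (k : ℤ) (-k : ℤ) (by ring)).app a
        exact W.le_retract ha ⟨i.hom, i.inv, i.hom_inv_id⟩
      exact h3 _ this _
  exact ⟨⟨fun h1 => h32 (h13 h1), h21⟩, ⟨fun h2 => h13 (h21 h2), h32⟩⟩
end
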